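/- The universal clique decomposition of a connected trivially perfect graph is unique up to isomorphism: if (T, {B_t}) and (T', {B'_t}) are two universal clique decompositions of the same connected trivially perfect graph G, then there is an isomorphism f of the rooted tree T onto the rooted tree T' (mapping the root to the root and preserving the child relation) such that B'_{f(t)} = B_t for every node t of T. -/

import Mathlib

open SimpleGraph

universe u

/-- A graph is *trivially perfect* if it has no induced subgraph isomorphic to `C₄` or `P₄`. -/
def TriviallyPerfect {V : Type u} (G : SimpleGraph V) : Prop :=
  IsEmpty (SimpleGraph.cycleGraph 4 ↪g G) ∧ IsEmpty (SimpleGraph.pathGraph 4 ↪g G)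

/-- A *universal clique decomposition* of a graph `G`: a finite rooted tree (modelled as a
finite partial order in which the set of elements above any element is a chain and which has
a top element, the root) together with a partition of the vertices into nonempty bags such that
adjacent vertices lie in comparable nodes, and each bag is exactly the set of universal
vertices of the subgraph induced by the union of the bags in the subtree below it. -/
structure UCD {V : Type u} (G : SimpleGraph V) : Type (u + 1) where
  ι : Type u
  [po : PartialOrder ι]
  [ot : OrderTop ι]
  [fin : Fintype ι]
  bag : ι → Set V
  bag_nonempty : ∀ t, (bag t).Nonempty
  bag_disjoint : ∀ s t, s ≠ t → Disjoint (bag s) (bag t)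
  bag_cover : ∀ v, ∃ t, v ∈ bag t
  up_chain : ∀ a b c : ι, a ≤ b → a ≤ c → b ≤ c ∨ c ≤ b
  adj_comparable : ∀ v w s t, G.Adj v w → v ∈ bag t → w ∈ bag s → s ≤ t ∨ t ≤ s
  bag_eq_universal : ∀ t, bag t =
    {v | (∃ s ≤ t, v ∈ bag s) ∧ ∀ w, (∃ s ≤ t, w ∈ bag s) → w ≠ v → G.Adj v w}

attribute [instance] UCD.po UCD.ot UCD.fin

namespace UCD

variable {V : Type u} {G : SimpleGraph V} (U : UCD G)

/-- `D_t`: the union of the bags in the subtree rooted at `t`. -/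
def subtreeSet (t : U.ι) : Set V := {v | ∃ s, s ≤ t ∧ v ∈ U.bag s}

/-- `Q_t`: the union of the bags on the path from `t` to the root. -/
def tailSet (t : U.ι) : Set V := {v | ∃ s, t ≤ s ∧ v ∈ U.bag s}

/-- `t` is a leaf of the decomposition tree. -/
def IsLeaf (t : U.ι) : Prop := ∀ s : U.ι, s ≤ t → s = t

end UCD

/-- `G + S`: the graph obtained from `G` by adding the pairs in `S` as edges. -/
def completes {V : Type u} (G : SimpleGraph V) (S : Set (Sym2 V)) : SimpleGraph V :=
  G ⊔ SimpleGraph.fromEdgeSet S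

/-- `S` is a set of non-edges of `G` (unordered pairs of distinct vertices, none an edge). -/
def IsCompletionSet {V : Type u} (G : SimpleGraph V) (S : Set (Sym2 V)) : Prop :=
  (∀ e ∈ S, ¬ e.IsDiag) ∧ Disjoint S G.edgeSet

/-- `S` is a minimal trivially perfect completion of `G`. -/
def IsMinTPCompletion {V : Type u} (G : SimpleGraph V) (S : Set (Sym2 V)) : Prop :=
  IsCompletionSet G S ∧ TriviallyPerfect (completes G S) ∧
    ∀ S' ⊂ S, ¬ TriviallyPerfect (completes G S')

/-- A vital potential maximal clique of `(G, k)`. -/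
def VitalPMC {V : Type u} (G : SimpleGraph V) (k : ℕ) (Ω : Set V) : Prop :=
  ∃ S, IsMinTPCompletion G S ∧ S.ncard ≤ k ∧ Maximal (completes G S).IsClique Ω

section Aux

variable {V : Type u} {G : SimpleGraph V}

/-- The closed neighborhood of a vertex. -/
def closedNbhd (G : SimpleGraph V) (v : V) : Set V := {x | x = v ∨ G.Adj v x}

lemma UCD.mem_bag_unique (U : UCD G) {s t : U.ι} {v : V}
    (hs : v ∈ U.bag s) (ht : v ∈ U.bag t) : s = t := by
  by_contra h
  exact (U.bag_disjoint s t h).le_bot ⟨hs, ht⟩ 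

lemma UCD.universal_of_mem (U : UCD G) {t : U.ι} {v : V} (hv : v ∈ U.bag t) :
    ∀ w, (∃ s ≤ t, w ∈ U.bag s) → w ≠ v → G.Adj v w := by
  have := U.bag_eq_universal t ▸ hv
  exact this.2

/-- Key lemma: the order of a UCD is determined by closed-neighborhood containment. -/
lemma UCD.le_iff_closedNbhd (U : UCD G) {s t : U.ι} {v w : V}
    (hv : v ∈ U.bag t) (hw : w ∈ U.bag s) :
    s ≤ t ↔ closedNbhd G w ⊆ closedNbhd G v := by
  constructor
  · intro hst x hx
    rcases hx with rfl | hadj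
    · -- x = w
      by_cases hwv : x = v
      · exact Or.inl hwv
      · exact Or.inr (U.universal_of_mem hv x ⟨s, hst, hw⟩ hwv)
    · -- G.Adj w x
      obtain ⟨r, hr⟩ := U.bag_cover x
      rcases U.adj_comparable w x r s hadj hw hr with hrs | hsr
      · by_cases hxv : x = v
        · exact Or.inl hxv
        · exact Or.inr (U.universal_of_mem hv x ⟨r, le_trans hrs hst, hr⟩ hxv)
      · rcases U.up_chain s r t hsr hst with hrt | htr
        · by_cases hxv : x = v
          · exact Or.inl hxv
          · exact Or.inr (U.universal_of_mem hv x ⟨r, hrt, hr⟩ hxv)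
        · by_cases hvx : v = x
          · exact Or.inl hvx.symm
          · exact Or.inr ((U.universal_of_mem hr v ⟨t, htr, hv⟩ hvx).symm)
  · intro hsub
    have hwv : w = v ∨ G.Adj v w := hsub (Or.inl rfl)
    rcases hwv with rfl | hadj
    · exact (U.mem_bag_unique hw hv).le
    · rcases U.adj_comparable v w s t hadj hv hw with hst | hts
      · exact hst
      · -- t ≤ s : show v ∈ bag s, hence s = t
        have hv' : v ∈ U.bag s := by
          rw [U.bag_eq_universal s]
          refine ⟨⟨t, hts, hv⟩, fun x hx hxv => ?_⟩
          by_cases hxw : x = w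
          · exact hxw ▸ hadj
          · have : G.Adj w x := U.universal_of_mem hw x hx hxw
            rcases hsub (Or.inr this) with h | h
            · exact absurd h hxv
            · exact h
        exact (U.mem_bag_unique hv' hv).le

/-- Two vertices with the same closed neighborhood lie in the same bag. -/
lemma UCD.mem_bag_of_closedNbhd (U : UCD G) {t : U.ι} {v w : V}
    (hv : v ∈ U.bag t) (h1 : closedNbhd G w ⊆ closedNbhd G v)
    (h2 : closedNbhd G v ⊆ closedNbhd G w) : w ∈ U.bag t := by
  obtain ⟨s, hs⟩ := U.bag_cover w
  have hst : s ≤ t := (U.le_iff_closedNbhd hv hs).2 h1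
  have hts : t ≤ s := (U.le_iff_closedNbhd hs hv).2 h2
  exact le_antisymm hst hts ▸ hs

end Aux

/-- Uniqueness of the universal clique decomposition of a connected trivially perfect graph,
up to an isomorphism of the rooted trees preserving the bags. -/
theorem ucd_unique {V : Type u} [Fintype V] (G : SimpleGraph V) (hG : G.Connected)
    (hTP : TriviallyPerfect G) (U U' : UCD G) :
    ∃ f : U.ι ≃o U'.ι, f ⊤ = ⊤ ∧ (∀ s t : U.ι, s ⋖ t ↔ f s ⋖ f t) ∧
      ∀ t : U.ι, U'.bag (f t) = U.bag t := by
  classical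
  -- representatives and node maps
  let rep : U.ι → V := fun t => (U.bag_nonempty t).choose
  have hrep : ∀ t, rep t ∈ U.bag t := fun t => (U.bag_nonempty t).choose_spec
  let rep' : U'.ι → V := fun t => (U'.bag_nonempty t).choose
  have hrep' : ∀ t, rep' t ∈ U'.bag t := fun t => (U'.bag_nonempty t).choose_spec
  let node : V → U.ι := fun v => (U.bag_cover v).choose
  have hnode : ∀ v, v ∈ U.bag (node v) := fun v => (U.bag_cover v).choose_spec
  let node' : V → U'.ι := fun v => (U'.bag_cover v).choose
  have hnode' : ∀ v, v ∈ U'.bag (node' v) := fun v => (U'.bag_cover v).choose_spec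
  have hnode_eq : ∀ (v : V) (t : U.ι), v ∈ U.bag t → node v = t :=
    fun v t hv => U.mem_bag_unique (hnode v) hv
  have hnode'_eq : ∀ (v : V) (t : U'.ι), v ∈ U'.bag t → node' v = t :=
    fun v t hv => U'.mem_bag_unique (hnode' v) hv
  let F : U.ι → U'.ι := fun t => node' (rep t)
  let Ginv : U'.ι → U.ι := fun t => node (rep' t)
  -- bag equality
  have hbag : ∀ t : U.ι, U'.bag (F t) = U.bag t := by
    intro t
    ext x
    constructor
    · intro hx
      have h1 := (U'.le_iff_closedNbhd (hnode' (rep t)) hx).1 le_rfl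
      have h2 := (U'.le_iff_closedNbhd hx (hnode' (rep t))).1 le_rfl
      exact U.mem_bag_of_closedNbhd (hrep t) h1 h2
    · intro hx
      have h1 := (U.le_iff_closedNbhd (hrep t) hx).1 le_rfl
      have h2 := (U.le_iff_closedNbhd hx (hrep t)).1 le_rfl
      exact U'.mem_bag_of_closedNbhd (hnode' (rep t)) h1 h2
  have hbag' : ∀ t : U'.ι, U.bag (Ginv t) = U'.bag t := by
    intro t
    ext x
    constructor
    · intro hx
      have h1 := (U.le_iff_closedNbhd (hnode (rep' t)) hx).1 le_rfl
      have h2 := (U.le_iff_closedNbhd hx (hnode (rep' t))).1 le_rfl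
      exact U'.mem_bag_of_closedNbhd (hrep' t) h1 h2
    · intro hx
      have h1 := (U'.le_iff_closedNbhd (hrep' t) hx).1 le_rfl
      have h2 := (U'.le_iff_closedNbhd hx (hrep' t)).1 le_rfl
      exact U.mem_bag_of_closedNbhd (hnode (rep' t)) h1 h2
  have hleft : Function.LeftInverse Ginv F := by
    intro t
    have : rep' (F t) ∈ U.bag t := by
      have := hrep' (F t)
      rwa [hbag t] at this
    exact hnode_eq _ _ this
  have hright : Function.RightInverse Ginv F := by
    intro t
    have : rep (Ginv t) ∈ U'.bag t := by
      have := hrep (Ginv t)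
      rwa [hbag' t] at this
    exact hnode'_eq _ _ this
  have hmono : ∀ s t : U.ι, F s ≤ F t ↔ s ≤ t := by
    intro s t
    rw [U'.le_iff_closedNbhd (hnode' (rep t)) (hnode' (rep s)),
      ← U.le_iff_closedNbhd (hrep t) (hrep s)]
  let f : U.ι ≃o U'.ι :=
    { toFun := F, invFun := Ginv, left_inv := hleft, right_inv := hright,
      map_rel_iff' := fun {s t} => hmono s t }
  refine ⟨f, ?_, ?_, hbag⟩
  · exact f.map_top
  · intro s t
    exact (apply_covBy_apply_iff f).symm
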